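/- Let F₁ : I → ℝ be the map x ↦ √x on an interval I ⊆ (0,∞) and suppose f : U → (0,∞) is m-times continuously differentiable with |f|_{C^j} ≤ C h^{4+j} for 1 ≤ j ≤ m and f ≈ h⁴ (i.e., c₁h⁴ ≤ f ≤ c₂h⁴ pointwise). Then the composition g = √f satisfies |g|_{C^m} ≤ C' h^{2+m}, where C' depends only on m, C, c₁, c₂. -/

import Mathlib

/-- If `f` is `C^m` on an open bounded set `U ⊆ ℝ²` with `c₁h⁴ ≤ f ≤ c₂h⁴` and
`|D^j f| ≤ C h^{4+j}` for `1 ≤ j ≤ m`, then `g = √f` satisfies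
`|D^m g| ≤ C' h^{2+m}` with `C'` depending only on `m, C, c₁, c₂`. -/
theorem sqrt_composition_derivative_bound (m : ℕ) (C c₁ c₂ : ℝ)
    (hC : 0 < C) (hc₁ : 0 < c₁) (hc₂ : 0 < c₂) :
    ∃ C' > 0, ∀ (h : ℝ), 0 < h → h ≤ 1 →
      ∀ (U : Set (EuclideanSpace ℝ (Fin 2))) (f : EuclideanSpace ℝ (Fin 2) → ℝ),
        IsOpen U → Bornology.IsBounded U →
        ContDiffOn ℝ m f U →
        (∀ x ∈ U, c₁ * h ^ 4 ≤ f x ∧ f x ≤ c₂ * h ^ 4) →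
        (∀ j : ℕ, 1 ≤ j → j ≤ m →
          ∀ x ∈ U, ‖iteratedFDerivWithin ℝ j f U x‖ ≤ C * h ^ (4 + j)) →
        ∀ x ∈ U,
          ‖iteratedFDerivWithin ℝ m (fun y => Real.sqrt (f y)) U x‖ ≤
            C' * h ^ (2 + m) := by
  -- `t` is a fixed open interval containing the range of the rescaled `f`
  set t : Set ℝ := Set.Ioi (c₁ / 2) with ht_def
  have ht : IsOpen t := isOpen_Ioi
  have htu : UniqueDiffOn ℝ t := ht.uniqueDiffOn
  -- sqrt is smooth on t
  have hsqrt : ContDiffOn ℝ (m : WithTop ℕ∞) Real.sqrt t := fun y hy =>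
    (Real.contDiffAt_sqrt (ne_of_gt (lt_trans (by positivity) hy))).contDiffWithinAt
  -- compact set where rescaled f takes values
  set S : Set ℝ := Set.Icc c₁ (max c₁ c₂) with hS_def
  have hSt : S ⊆ t := fun y hy => lt_of_lt_of_le (by linarith) hy.1
  have hScompact : IsCompact S := isCompact_Icc
  have hSne : S.Nonempty := Set.nonempty_Icc.2 (le_max_left _ _)
  -- uniform bound K for all derivatives of sqrt up to order m on S
  have hcont : ContinuousOn
      (fun y => ∑ i ∈ Finset.range (m + 1), ‖iteratedFDerivWithin ℝ i Real.sqrt t y‖) S := by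
    refine continuousOn_finset_sum (f := fun i y => ‖iteratedFDerivWithin ℝ i Real.sqrt t y‖)
      (Finset.range (m + 1)) fun i hi => ?_
    exact ((hsqrt.continuousOn_iteratedFDerivWithin
      (by exact_mod_cast Nat.lt_succ_iff.1 (Finset.mem_range.1 hi)) htu).norm).mono hSt
  obtain ⟨y₀, hy₀S, hy₀max⟩ := hScompact.exists_isMaxOn hSne hcont
  set K : ℝ := ∑ i ∈ Finset.range (m + 1), ‖iteratedFDerivWithin ℝ i Real.sqrt t y₀‖ with hKdef
  have hK : ∀ y ∈ S, (∑ i ∈ Finset.range (m + 1),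
      ‖iteratedFDerivWithin ℝ i Real.sqrt t y‖) ≤ K := fun y hy => hy₀max hy
  have hK0 : 0 ≤ K := by
    obtain ⟨y, hy⟩ := hSne
    exact le_trans (Finset.sum_nonneg fun i _ => norm_nonneg _) (hK y hy)
  have hKbound : ∀ i ≤ m, ∀ y ∈ S, ‖iteratedFDerivWithin ℝ i Real.sqrt t y‖ ≤ K := by
    intro i hi y hy
    refine le_trans ?_ (hK y hy)
    exact Finset.single_le_sum
      (f := fun j => ‖iteratedFDerivWithin ℝ j Real.sqrt t y‖)
      (fun j _ => norm_nonneg _) (Finset.mem_range.2 (Nat.lt_succ_of_le hi))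
  set M : ℝ := max C 1 with hM_def
  have hM1 : (1 : ℝ) ≤ M := le_max_right _ _
  refine ⟨max 1 ((Nat.factorial m : ℝ) * K * M ^ m), lt_of_lt_of_le one_pos (le_max_left _ _), ?_⟩
  intro h hh hh1 U f hU hUb hf hrange hder x hx
  have hUu : UniqueDiffOn ℝ U := hU.uniqueDiffOn
  have hh4 : (0 : ℝ) < h ^ 4 := by positivity
  have hh2 : (0 : ℝ) < h ^ 2 := by positivity
  -- rescaled function
  set ft : EuclideanSpace ℝ (Fin 2) → ℝ := fun y => (h ^ 4)⁻¹ • f y with hft_def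
  have hftCD : ContDiffOn ℝ (m : WithTop ℕ∞) ft U := hf.const_smul _
  have hftS : ∀ y ∈ U, ft y ∈ S := by
    intro y hy
    obtain ⟨h1, h2⟩ := hrange y hy
    constructor
    · show c₁ ≤ (h ^ 4)⁻¹ * f y
      rw [le_inv_mul_iff₀ hh4]
      nlinarith
    · show (h ^ 4)⁻¹ * f y ≤ max c₁ c₂
      rw [inv_mul_le_iff₀ hh4]
      nlinarith [le_max_right c₁ c₂, le_max_left c₁ c₂]
  have hftt : Set.MapsTo ft U t := fun y hy => hSt (hftS y hy)
  -- sqrt f = h^2 • (sqrt ∘ ft)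
  have hfun : (fun y => Real.sqrt (f y)) = fun y => (h ^ 2) • (Real.sqrt ∘ ft) y := by
    funext y
    simp only [Function.comp, hft_def, smul_eq_mul]
    rw [Real.sqrt_mul (by positivity) (f y), Real.sqrt_inv]
    have h4 : Real.sqrt (h ^ 4) = h ^ 2 := by
      rw [show h ^ 4 = (h ^ 2) ^ 2 by ring, Real.sqrt_sq (le_of_lt hh2)]
    rw [h4]
    field_simp
  -- composition is smooth
  have hcomp : ContDiffOn ℝ (m : WithTop ℕ∞) (Real.sqrt ∘ ft) U := hsqrt.comp hftCD hftt
  have hsm : iteratedFDerivWithin ℝ m (fun y => (h ^ 2) • (Real.sqrt ∘ ft) y) U x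
      = (h ^ 2) • iteratedFDerivWithin ℝ m (Real.sqrt ∘ ft) U x :=
    iteratedFDerivWithin_const_smul_apply (a := (h ^ 2 : ℝ)) (hcomp x hx) hUu hx
  rw [hfun, hsm, norm_smul]
  have habs : ‖(h ^ 2 : ℝ)‖ = h ^ 2 := abs_of_pos hh2
  rw [habs]
  -- apply the composition bound
  have hmain : ‖iteratedFDerivWithin ℝ m (Real.sqrt ∘ ft) U x‖ ≤ (Nat.factorial m : ℝ) * K * (M * h) ^ m := by
    apply norm_iteratedFDerivWithin_comp_le hsqrt hftCD le_rfl htu hUu hftt hx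
    · intro i hi
      exact hKbound i hi _ (hftS x hx)
    · intro i hi1 him
      have : iteratedFDerivWithin ℝ i ft U x = (h ^ 4)⁻¹ • iteratedFDerivWithin ℝ i f U x :=
        iteratedFDerivWithin_const_smul_apply (a := ((h ^ 4)⁻¹ : ℝ))
          (hf.of_le (by exact_mod_cast him : ((i : ℕ) : WithTop ℕ∞) ≤ m) x hx) hUu hx
      rw [this, norm_smul]
      have h1 : ‖((h ^ 4)⁻¹ : ℝ)‖ = (h ^ 4)⁻¹ := abs_of_pos (by positivity)
      rw [h1]
      calc (h ^ 4)⁻¹ * ‖iteratedFDerivWithin ℝ i f U x‖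
          ≤ (h ^ 4)⁻¹ * (C * h ^ (4 + i)) := by
            gcongr
            exact hder i hi1 him x hx
        _ = C * h ^ i := by
            rw [pow_add]
            field_simp
        _ ≤ M ^ i * h ^ i := by
            gcongr
            calc C = C ^ 1 := (pow_one C).symm
              _ ≤ M ^ 1 := by gcongr; exact le_max_left _ _
              _ ≤ M ^ i := pow_le_pow_right₀ hM1 hi1
        _ = (M * h) ^ i := (mul_pow _ _ _).symm
  calc h ^ 2 * ‖iteratedFDerivWithin ℝ m (Real.sqrt ∘ ft) U x‖
      ≤ h ^ 2 * ((Nat.factorial m : ℝ) * K * (M * h) ^ m) := by gcongr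
    _ = ((Nat.factorial m : ℝ) * K * M ^ m) * h ^ (2 + m) := by rw [mul_pow, pow_add]; ring
    _ ≤ max 1 ((Nat.factorial m : ℝ) * K * M ^ m) * h ^ (2 + m) := by gcongr; exact le_max_right _ _
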